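/- 𝔞⁺(ō) = 𝔠: if ℱ is a mad family in 𝒜_T of cardinality ō, then any family 𝒢 ⊆ [T]^{ℵ₀} disjoint from ℱ such that ℱ ∪ 𝒢 is a mad family on T must have cardinality 𝔠. -/

import Mathlib

open Cardinal Set

/-- The full binary tree `T = 2^{<ω}`, modeled as finite lists of booleans;
`s ≤ t` iff `t` is a prefix of `s` (i.e. `s` extends `t`). -/
abbrev BinTree := List Bool

/-- The restriction `f↾n ∈ 2^{<ω}` of `f ∈ 2^ω`. -/
def restr (f : ℕ → Bool) (n : ℕ) : BinTree := List.ofFn (fun i : Fin n => f i)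

/-- The branch `B(f) = { f↾n : n ∈ ω }` induced by `f ∈ 2^ω`. -/
def branch (f : ℕ → Bool) : Set BinTree := Set.range (restr f)

/-- `⌊X⌋ = { f ∈ 2^ω : |B(f) ∩ X| = ℵ₀ }`. -/
def floorSet (X : Set BinTree) : Set (ℕ → Bool) := {f | (branch f ∩ X).Infinite}

/-- `X` is covered by finitely many branches of `T`. -/
def CoveredByFinitelyManyBranches (X : Set BinTree) : Prop :=
  ∃ s : Finset (ℕ → Bool), X ⊆ ⋃ f ∈ s, branch f

/-- `X` contains no infinite antichain (w.r.t. the prefix/extension order on `T`). -/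
def NoInfiniteAntichain (X : Set BinTree) : Prop :=
  ¬ ∃ A ⊆ X, A.Infinite ∧ IsAntichain (· <+: ·) A

/-- The class `ℬ_T` of infinite subsets of `T` containing no infinite antichain. -/
def Bclass : Set (Set BinTree) := { X | X.Infinite ∧ NoInfiniteAntichain X }

/-- The class `𝒜_T` of infinite antichains of `T`. -/
def Aclass : Set (Set BinTree) := { X | X.Infinite ∧ IsAntichain (· <+: ·) X }

/-- The class `𝒩𝒟_T` of infinite `X ⊆ T` with `⌊X⌋` nowhere dense in Cantor space. -/
def NDclass : Set (Set BinTree) := { X | X.Infinite ∧ IsNowhereDense (floorSet X) }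

/-- `σ` is the standard fair-coin product measure on `2^ω`, characterized as a
probability measure giving each basic clopen set `{ f : f↾ℓ(t) = t }` measure `2^{-ℓ(t)}`. -/
def IsCantorMeasure (σ : MeasureTheory.Measure (ℕ → Bool)) : Prop :=
  MeasureTheory.IsProbabilityMeasure σ ∧
    ∀ t : BinTree, σ { f | restr f t.length = t } = (2 : ENNReal)⁻¹ ^ t.length

/-- The class `𝒩_T` (w.r.t. a measure `σ` on `2^ω`) of infinite `X ⊆ T` with `σ(⌊X⌋) = 0`. -/
def Nclass (σ : MeasureTheory.Measure (ℕ → Bool)) : Set (Set BinTree) :=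
  { X | X.Infinite ∧ σ (floorSet X) = 0 }

/-- Pairwise almost disjoint family of infinite sets. -/
def ADFamily {α : Type*} (F : Set (Set α)) : Prop :=
  (∀ X ∈ F, X.Infinite) ∧ F.Pairwise fun X Y => (X ∩ Y).Finite

/-- `F` is a maximal almost disjoint family within `𝒳`. -/
def MadIn {α : Type*} (𝒳 F : Set (Set α)) : Prop :=
  F ⊆ 𝒳 ∧ ADFamily F ∧ ∀ Y ∈ 𝒳, ∃ X ∈ F, (Y ∩ X).Infinite

/-- The collection `[α]^{ℵ₀}` of all infinite subsets of `α`. -/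
def infSets (α : Type*) : Set (Set α) := { X | X.Infinite }

/-- `𝔞(𝒳)`: the least cardinality of an infinite mad family within `𝒳`. -/
noncomputable def aInv {α : Type*} (𝒳 : Set (Set α)) : Cardinal :=
  sInf { c : Cardinal | ∃ F, F.Infinite ∧ MadIn 𝒳 F ∧ #F = c }

/-- `cov(ℳ)`: the least number of meager subsets of `2^ω` covering `2^ω`. -/
noncomputable def covMeager : Cardinal :=
  sInf { c : Cardinal | ∃ S : Set (Set (ℕ → Bool)),
    (∀ A ∈ S, IsMeagre A) ∧ ⋃₀ S = Set.univ ∧ #S = c }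

/-- `cov(𝒩)`: the least number of `σ`-null subsets of `2^ω` covering `2^ω`. -/
noncomputable def covNull (σ : MeasureTheory.Measure (ℕ → Bool)) : Cardinal :=
  sInf { c : Cardinal | ∃ S : Set (Set (ℕ → Bool)),
    (∀ A ∈ S, σ A = 0) ∧ ⋃₀ S = Set.univ ∧ #S = c }

/-- `F^⊥`: the family of infinite sets almost disjoint from every member of `F`. -/
def perp {α : Type*} (F : Set (Set α)) : Set (Set α) :=
  { Y | Y.Infinite ∧ ∀ X ∈ F, (Y ∩ X).Finite }

/-- Membership in the ideal `ℐ(G)` generated by `G` together with the finite sets: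
`S ⊆* ∪G'` for some finite `G' ⊆ G`. -/
def InIdeal {α : Type*} (G : Set (Set α)) (S : Set α) : Prop :=
  ∃ G' : Finset (Set α), ↑G' ⊆ G ∧ (S \ ⋃₀ ↑G').Finite

/-- `𝔞⁺(F) = 𝔞(F^⊥)`. -/
noncomputable def aPlus {α : Type*} (F : Set (Set α)) : Cardinal := aInv (perp F)

/-- `B` almost decides `F`: `B^⊥` is exactly the family of infinite members of
the ideal generated by `F \ B` and the finite sets. -/
def AlmostDecides {α : Type*} (B F : Set (Set α)) : Prop :=
  perp B = { Y | Y.Infinite ∧ InIdeal (F \ B) Y }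

/-- A subset `C` of a poset is centered: every finite subset of `C` has a common
lower bound. -/
def Centered {P : Type*} [Preorder P] (C : Set P) : Prop :=
  ∀ s : Finset P, ↑s ⊆ C → ∃ p, ∀ q ∈ s, p ≤ q

/-- A poset is σ-centered: it is a countable union of centered subsets. -/
def SigmaCentered (P : Type*) [Preorder P] : Prop :=
  ∃ C : ℕ → Set P, (∀ n, Centered (C n)) ∧ ⋃ n, C n = Set.univ

/-- `D` is dense (below every condition) in the poset `P`. -/
def DenseBelow {P : Type*} [Preorder P] (D : Set P) : Prop :=
  ∀ p : P, ∃ q ∈ D, q ≤ p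

/-- `G` is a filter on the poset `P`. -/
def IsFilterOn {P : Type*} [Preorder P] (G : Set P) : Prop :=
  (∀ p ∈ G, ∀ q, p ≤ q → q ∈ G) ∧ ∀ p ∈ G, ∀ q ∈ G, ∃ r ∈ G, r ≤ p ∧ r ≤ q

/-- Martin's axiom for σ-centered posets: for every nonempty σ-centered poset and
fewer than continuum many dense sets there is a filter meeting them all. -/
def MASigmaCentered : Prop :=
  ∀ (P : Type) (_ : Preorder P) (_ : Nonempty P), SigmaCentered P →
    ∀ 𝒟 : Set (Set P), #𝒟 < Cardinal.continuum → (∀ D ∈ 𝒟, DenseBelow D) →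
      ∃ G : Set P, IsFilterOn G ∧ ∀ D ∈ 𝒟, (G ∩ D).Nonempty

-- auxiliary lemmas


@[simp] lemma restr_length (f : ℕ → Bool) (n : ℕ) : (restr f n).length = n :=
  List.length_ofFn

lemma restr_prefix (f : ℕ → Bool) {m n : ℕ} (h : m ≤ n) : restr f m <+: restr f n := by
  rw [List.prefix_iff_eq_take]
  apply List.ext_getElem <;> simp [restr, h, List.getElem_take]

lemma restr_inj (f : ℕ → Bool) : Function.Injective (restr f) := fun m n h => by
  have := congrArg List.length h; simpa using this

lemma restr_eq_restr {f g : ℕ → Bool} {n : ℕ} :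
    restr f n = restr g n ↔ ∀ i < n, f i = g i := by
  simp [restr, List.ofFn_inj, funext_iff, Fin.forall_iff]

def extSet (Y : Set BinTree) (s : BinTree) : Set (ℕ → Bool) :=
  {f | f ∈ floorSet Y ∧ restr f s.length = s}

lemma step_ex (Y : Set BinTree) (s : BinTree) (hs : (extSet Y s).Infinite) :
    ∃ s' t : BinTree, s <+: s' ∧ (extSet Y s').Infinite ∧ t ∈ Y ∧ s <+: t ∧
      ¬ s' <+: t ∧ ¬ t <+: s' := by
  obtain ⟨f, hf, g, hg, hfg⟩ := hs.nontrivial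
  have hd : ∃ n, f n ≠ g n := Function.ne_iff.mp hfg
  set d0 := Nat.find hd with hd0
  set d := d0 + 1 with hdd
  have hLd : s.length ≤ d0 := by
    by_contra hL
    push_neg at hL
    have : f d0 = g d0 := by
      have := restr_eq_restr.mp (hf.2.trans hg.2.symm)
      exact this d0 hL
    exact Nat.find_spec hd this
  have hLd' : s.length ≤ d := hLd.trans (Nat.le_succ _)
  -- pigeonhole on restrictions of length d
  have hpig : ∃ v : Fin d → Bool,
      {h ∈ extSet Y s | (fun i : Fin d => h i) = v}.Infinite := by
    by_contra hall
    push_neg at hall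
    apply hs
    have hsub : extSet Y s ⊆
        ⋃ v : Fin d → Bool, {h ∈ extSet Y s | (fun i : Fin d => h i) = v} :=
      fun h hh => Set.mem_iUnion.2 ⟨_, hh, rfl⟩
    exact (Set.finite_iUnion fun v => hall v).subset hsub
  obtain ⟨v, hv⟩ := hpig
  set c : BinTree := List.ofFn v with hc
  have hcd : c.length = d := List.length_ofFn
  have hfib : {h ∈ extSet Y s | (fun i : Fin d => h i) = v} ⊆ extSet Y c := by
    rintro h ⟨hhE, hre⟩
    refine ⟨hhE.1, ?_⟩
    rw [hcd]
    show List.ofFn (fun i : Fin d => h i) = List.ofFn v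
    rw [hre]
  have hcinf : (extSet Y c).Infinite := hv.mono hfib
  obtain ⟨h₁, hh₁E, hh₁v⟩ := hv.nonempty
  have hsc : s <+: c := by
    have : s = restr h₁ s.length := hh₁E.2.symm
    rw [this]
    have : restr h₁ d = c := by
      show List.ofFn (fun i : Fin d => h₁ i) = List.ofFn v
      rw [hh₁v]
    rw [← this]
    exact restr_prefix _ hLd'
  -- f and g restrict differently at level d
  have hfgd : restr f d ≠ restr g d := by
    intro e
    exact Nat.find_spec hd (restr_eq_restr.mp e d0 (Nat.lt_succ_self _))
  -- pick f' with restr f' d ≠ c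
  obtain ⟨f', hf'E, hf'c⟩ : ∃ f', f' ∈ extSet Y s ∧ restr f' d ≠ c := by
    by_cases hfc : restr f d = c
    · exact ⟨g, hg, fun e => hfgd (hfc.trans e.symm)⟩
    · exact ⟨f, hf, hfc⟩
  -- find a long element of branch f' ∩ Y
  have hK : {k : ℕ | restr f' k ∈ Y}.Infinite := by
    by_contra hKf
    rw [Set.not_infinite] at hKf
    apply hf'E.1
    have hsub : branch f' ∩ Y ⊆ restr f' '' {k : ℕ | restr f' k ∈ Y} := by
      rintro x ⟨⟨k, rfl⟩, hxY⟩
      exact ⟨k, hxY, rfl⟩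
    exact (hKf.image _).subset hsub
  obtain ⟨k, hkY, hkd⟩ := hK.exists_gt d
  refine ⟨c, restr f' k, hsc, hcinf, hkY, ?_, ?_, ?_⟩
  · have : s = restr f' s.length := hf'E.2.symm
    rw [this]
    exact restr_prefix _ (hLd'.trans hkd.le)
  · intro hct
    have hA : restr f' d <+: restr f' k := restr_prefix _ hkd.le
    rcases List.prefix_or_prefix_of_prefix hct hA with h|h
    · exact hf'c (h.eq_of_length (by simp [hcd])).symm
    · exact hf'c (h.eq_of_length (by simp [hcd]))
  · intro htc
    have := htc.length_le
    simp [hcd] at this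
    omega

lemma exists_infinite_antichain (Y : Set BinTree) (hfl : (floorSet Y).Infinite) :
    ∃ A ⊆ Y, A.Infinite ∧ IsAntichain (· <+: ·) A := by
  have h0 : (extSet Y []).Infinite := hfl.mono (fun f hf => ⟨hf, by simp [restr]⟩)
  have key : ∀ p : {s : BinTree // (extSet Y s).Infinite},
      ∃ s' t, (p.1 <+: s') ∧ (extSet Y s').Infinite ∧ t ∈ Y ∧ p.1 <+: t ∧
        ¬ s' <+: t ∧ ¬ t <+: s' := fun p => step_ex Y p.1 p.2
  choose ns ts h1 h2 h3 h4 h5 h6 using key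
  set nxt : {s : BinTree // (extSet Y s).Infinite} → {s : BinTree // (extSet Y s).Infinite} :=
    fun p => ⟨ns p, h2 p⟩ with hnxt
  set seq : ℕ → {s : BinTree // (extSet Y s).Infinite} := fun n => nxt^[n] ⟨[], h0⟩ with hseqdef
  have hseq : ∀ n, seq (n+1) = nxt (seq n) := fun n => Function.iterate_succ_apply' _ _ _
  have hchain : ∀ m n, m ≤ n → (seq m).1 <+: (seq n).1 := by
    intro m n hmn
    induction hmn with
    | refl => exact List.prefix_refl _
    | @step n' h ih =>
      rw [hseq n']
      exact ih.trans (h1 (seq n'))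
  have main : ∀ m n, m < n → ¬ ts (seq m) <+: ts (seq n) ∧ ¬ ts (seq n) <+: ts (seq m) := by
    intro m n hmn
    have hsm : (seq (m+1)).1 = ns (seq m) := by rw [hseq]
    have hA : ns (seq m) <+: ts (seq n) := by
      rw [← hsm]
      exact (hchain (m+1) n hmn).trans (h4 (seq n))
    constructor
    · intro hc
      rcases List.prefix_or_prefix_of_prefix hc hA with h|h
      · exact h6 (seq m) h
      · exact h5 (seq m) h
    · intro hc
      exact h5 (seq m) (hA.trans hc)
  have hinj : Function.Injective (fun n => ts (seq n)) := by
    intro m n e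
    simp only at e
    by_contra hne
    rcases Ne.lt_or_gt hne with h|h
    · exact (main m n h).1 (by rw [e])
    · exact (main n m h).1 (by rw [e])
  refine ⟨Set.range (fun n => ts (seq n)), ?_, Set.infinite_range_of_injective hinj, ?_⟩
  · rintro x ⟨n, rfl⟩
    exact h3 (seq n)
  · rintro x ⟨m, rfl⟩ y ⟨n, rfl⟩ hne
    have hmn : m ≠ n := fun e => hne (by rw [e])
    rcases hmn.lt_or_gt with h|h
    · exact (main m n h).1
    · exact (main n m h).2

lemma mk_list_bool : #(Set BinTree) = Cardinal.continuum := by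
  rw [Cardinal.mk_set, Cardinal.mk_list_eq_aleph0, Cardinal.two_power_aleph0]

lemma mk_cantor : #(ℕ → Bool) = Cardinal.continuum := by
  rw [Cardinal.mk_arrow, Cardinal.mk_bool, Cardinal.mk_nat]
  simp [Cardinal.two_power_aleph0]

/-- `𝔞⁺(ō) = 𝔠`: if `F` is mad in `𝒜_T` of cardinality `ō = 𝔞(𝒜_T)` and `G` is disjoint
from `F` with `F ∪ G` mad on `T`, then `|G| = 𝔠`. -/
theorem stmt13 (F G : Set (Set BinTree)) (hF : MadIn Aclass F)
    (hcard : #F = aInv Aclass) (hdisj : Disjoint F G)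
    (hmad : MadIn (infSets BinTree) (F ∪ G)) :
    #G = Cardinal.continuum := by
  apply le_antisymm
  · exact le_of_le_of_eq (Cardinal.mk_set_le G) mk_list_bool
  · -- each Y ∈ G is a.d. from every X ∈ F
    have hGF : ∀ Y ∈ G, ∀ X ∈ F, (Y ∩ X).Finite := by
      intro Y hY X hX
      have hne : X ≠ Y := fun e => Set.disjoint_left.mp hdisj (e ▸ hX) hY
      have := hmad.2.1.2 (Or.inl hX) (Or.inr hY) hne
      simp only [Set.inter_comm X Y] at this
      exact this
    -- floorSet of each Y ∈ G is finite
    have hfin : ∀ Y ∈ G, (floorSet Y).Finite := by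
      intro Y hY
      by_contra hI
      rw [← Set.not_infinite] at hI
      push_neg at hI
      obtain ⟨A, hAY, hAinf, hAanti⟩ := exists_infinite_antichain Y hI
      obtain ⟨X, hXF, hAX⟩ := hF.2.2 A ⟨hAinf, hAanti⟩
      exact hAX (((hGF Y hY X hXF)).subset (Set.inter_subset_inter_left X hAY))
    -- every f : ℕ → Bool is in some floorSet Y, Y ∈ G
    have hcov : ∀ f : ℕ → Bool, ∃ Y ∈ G, f ∈ floorSet Y := by
      intro f
      have hbr : (branch f).Infinite := Set.infinite_range_of_injective (restr_inj f)
      obtain ⟨Z, hZ, hint⟩ := hmad.2.2 (branch f) hbr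
      rcases hZ with hZF | hZG
      · exfalso
        have hanti := (hF.1 hZF).2
        apply hint
        have hsub : (branch f ∩ Z).Subsingleton := by
          rintro x ⟨⟨m, rfl⟩, hxZ⟩ y ⟨⟨n, rfl⟩, hyZ⟩
          by_contra hne
          rcases le_total m n with h|h
          · exact hanti hxZ hyZ hne (restr_prefix f h)
          · exact hanti hyZ hxZ (Ne.symm hne) (restr_prefix f h)
        exact hsub.finite
      · exact ⟨Z, hZG, hint⟩
    -- cardinal arithmetic
    by_contra hlt
    rw [not_le] at hlt
    have hU : (Set.univ : Set (ℕ → Bool)) ⊆ ⋃ (Y : G), floorSet (Y : Set BinTree) := by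
      intro f _
      obtain ⟨Y, hY, hf⟩ := hcov f
      exact Set.mem_iUnion.2 ⟨⟨Y, hY⟩, hf⟩
    have h1 : Cardinal.continuum ≤ #(⋃ (Y : G), floorSet (Y : Set BinTree)) := by
      calc Cardinal.continuum = #(ℕ → Bool) := mk_cantor.symm
        _ = #(Set.univ : Set (ℕ → Bool)) := (Cardinal.mk_univ).symm
        _ ≤ _ := Cardinal.mk_le_mk_of_subset hU
    rcases isEmpty_or_nonempty G with hGe | hGne
    · rw [Set.iUnion_of_empty] at h1
      simp at h1
      exact Cardinal.continuum_ne_zero h1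
    · have h2 : #(⋃ (Y : G), floorSet (Y : Set BinTree)) ≤ #G * Cardinal.aleph0 := by
        refine (Cardinal.mk_iUnion_le _).trans ?_
        apply mul_le_mul_right
        exact ciSup_le' fun Y =>
          (Cardinal.lt_aleph0_iff_set_finite.2 (hfin Y.1 Y.2)).le
      have h3 : #G * Cardinal.aleph0 < Cardinal.continuum := by
        rcases le_or_gt (#G) Cardinal.aleph0 with h | h
        · calc #G * Cardinal.aleph0 ≤ Cardinal.aleph0 * Cardinal.aleph0 :=
                mul_le_mul_left h _
            _ = Cardinal.aleph0 := Cardinal.aleph0_mul_aleph0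
            _ < Cardinal.continuum := Cardinal.aleph0_lt_continuum
        · rw [Cardinal.mul_eq_max h.le (le_refl _)]
          exact max_lt hlt Cardinal.aleph0_lt_continuum
      exact absurd (h1.trans h2) (not_le.2 h3)
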